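/- A binary relation ≽ on A^N satisfies weak order, symmetry, separability, sufficientarian judgment, and monotonicity if and only if it is monotone-sufficientarian, i.e., sufficientarian with a sufficient set S that is upper-comprehensive (a ∈ S and b ≥ a imply b ∈ S). -/

import Mathlib

open Function

section Defs

variable {N A : Type*}

/-- Weak order: complete and transitive. -/
def WeakOrderRel (R : (N → A) → (N → A) → Prop) : Prop :=
  (∀ x y, R x y ∨ R y x) ∧ ∀ x y z, R x y → R y z → R x z

/-- The strict part of a relation. -/
def StrictRel (R : (N → A) → (N → A) → Prop) (x y : N → A) : Prop :=
  R x y ∧ ¬ R y x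

/-- Symmetry: any allocation is socially indifferent to any permutation of it. -/
def SymmetryAx (R : (N → A) → (N → A) → Prop) : Prop :=
  ∀ (σ : Equiv.Perm N) (x : N → A), R x (x ∘ σ) ∧ R (x ∘ σ) x

open Classical in
/-- `splice M x y` agrees with `x` on `M` and with `y` off `M`. -/
noncomputable def splice (M : Set N) (x y : N → A) : N → A :=
  fun i => if i ∈ M then x i else y i

/-- Separability. -/
def SeparabilityAx (R : (N → A) → (N → A) → Prop) : Prop :=
  ∀ (M : Set N) (x y x' y' : N → A),
    (R (splice M x y) (splice M x' y) ↔ R (splice M x y') (splice M x' y'))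

open Classical in
/-- `alloc i a b` gives `a` to agent `i` and `b` to everyone else. -/
noncomputable def alloc (i : N) (a b : A) : N → A :=
  Function.update (fun _ => b) i a

open Classical in
/-- `alloc2 i j a c b` gives `a` to `i`, `c` to `j`, and `b` to the rest. -/
noncomputable def alloc2 (i j : N) (a c b : A) : N → A :=
  Function.update (alloc i a b) j c

/-- Sufficientarian judgment. -/
def SuffJudgment (R : (N → A) → (N → A) → Prop) : Prop :=
  ∀ (a b c : A) (i j : N), i ≠ j →
    StrictRel R (fun _ => b) (alloc i a b) →
    R (alloc i a b) (alloc2 i j a c b)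

/-- Weak sufficientarian judgment. -/
def WeakSuffJudgment (R : (N → A) → (N → A) → Prop) : Prop :=
  ∀ (a b c : A) (i j : N), i ≠ j →
    StrictRel R (fun _ => b) (alloc i a b) →
    StrictRel R (fun _ => b) (alloc2 i j a c b)

/-- Sufficientarianism: comparisons count agents whose consumption is in a sufficient set. -/
def IsSufficientarian [Fintype N] (R : (N → A) → (N → A) → Prop) : Prop :=
  ∃ S : Set A, ∀ x y : N → A,
    R x y ↔ Nat.card {i : N // x i ∈ S} ≥ Nat.card {i : N // y i ∈ S}

end Defs

/-- Monotonicity: pointwise domination implies social weak preference. -/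
def MonotonicityAx {N A : Type*} [Preorder A] (R : (N → A) → (N → A) → Prop) : Prop :=
  ∀ x y : N → A, (∀ i, y i ≤ x i) → R x y

/-- Monotone-sufficientarianism: sufficientarian with an upper-comprehensive sufficient set. -/
def IsMonotoneSufficientarian {N A : Type*} [Fintype N] [Preorder A]
    (R : (N → A) → (N → A) → Prop) : Prop :=
  ∃ S : Set A, (∀ a ∈ S, ∀ b : A, a ≤ b → b ∈ S) ∧
    ∀ x y : N → A,
      R x y ↔ Nat.card {i : N // x i ∈ S} ≥ Nat.card {i : N // y i ∈ S}


/-! ### Auxiliary machinery -/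

section Aux

open Classical Function Finset

variable {N A : Type*}

/-- Count of agents whose consumption is in `S`. -/
noncomputable def cntS [Fintype N] (S : Set A) (x : N → A) : ℕ :=
  (Finset.univ.filter fun i => x i ∈ S).card

lemma natCard_eq_cntS [Fintype N] (S : Set A) (x : N → A) :
    Nat.card {i : N // x i ∈ S} = cntS S x := by
  classical
  rw [Nat.card_eq_fintype_card, cntS]
  convert Fintype.card_subtype (fun i => x i ∈ S) using 2

lemma splice_eq_update (i : N) (x y : N → A) :
    splice {i} x y = Function.update y i (x i) := by
  classical
  ext k
  by_cases h : k = i <;> simp [splice, Function.update, h]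

lemma alloc_eq_update (i : N) (a b : A) :
    alloc i a b = Function.update (fun _ => b) i a := by
  classical
  ext k
  by_cases h : k = i <;> simp [alloc, Function.update, h]

lemma alloc2_eq_update (i j : N) (a c b : A) :
    alloc2 i j a c b = Function.update (alloc i a b) j c := by
  classical
  ext k
  by_cases h : k = j <;> simp [alloc2, Function.update, h]

lemma exists_perm_finset [Fintype N] {s t : Finset N} (h : s.card = t.card) :
    ∃ σ : Equiv.Perm N, ∀ i, σ i ∈ s ↔ i ∈ t := by
  classical
  have hcard1 : Fintype.card {i : N // i ∈ t} = Fintype.card {i : N // i ∈ s} := by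
    simp [Fintype.card_subtype, Finset.filter_mem_eq_inter, h]
  have hcard2 : Fintype.card {i : N // ¬ i ∈ t} = Fintype.card {i : N // ¬ i ∈ s} := by
    rw [Fintype.card_subtype_compl, Fintype.card_subtype_compl, hcard1]
  obtain ⟨e⟩ := Fintype.card_eq.mp hcard1
  obtain ⟨f⟩ := Fintype.card_eq.mp hcard2
  refine ⟨Equiv.subtypeCongr e f, fun i => ?_⟩
  by_cases hi : i ∈ t
  · simp only [Equiv.subtypeCongr, Equiv.trans_apply, Equiv.sumCompl_symm_apply_of_pos hi,
      Equiv.sumCongr_apply, Sum.map_inl, Equiv.sumCompl_apply_inl]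
    exact iff_of_true (e ⟨i, hi⟩).2 hi
  · simp only [Equiv.subtypeCongr, Equiv.trans_apply, Equiv.sumCompl_symm_apply_of_neg hi,
      Equiv.sumCongr_apply, Sum.map_inr, Equiv.sumCompl_apply_inr]
    exact iff_of_false (f ⟨i, hi⟩).2 hi

end Aux

section Forward

open Classical Function Finset

variable {N A : Type*} [Fintype N] [Preorder A]

/-- The auxiliary one-coordinate comparison relation. -/
def geR (R : (N → A) → (N → A) → Prop) (i₀ : N) (a c : A) : Prop :=
  R (alloc i₀ a c) (fun _ => c)

lemma forward_dir (hN : 2 ≤ Fintype.card N)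
    (R : (N → A) → (N → A) → Prop)
    (hC : ∀ x y : N → A, R x y ∨ R y x) (hT : ∀ x y z : N → A, R x y → R y z → R x z)
    (hSym : SymmetryAx R) (hSep : SeparabilityAx R)
    (hSJ : SuffJudgment R) (hM : MonotonicityAx R) :
    IsMonotoneSufficientarian R := by
  classical
  obtain ⟨i₀, j₀, hij⟩ := Fintype.exists_pair_of_one_lt_card hN
  have hRrefl : ∀ x : N → A, R x x := fun x => (hC x x).elim id id
  -- congruence of R along indifferences
  have hcong : ∀ {x x' y y' : N → A}, (R x x' ∧ R x' x) → (R y y' ∧ R y' y) →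
      (R x y ↔ R x' y') := by
    intro x x' y y' hx hy
    constructor
    · intro h; exact hT _ _ _ hx.2 (hT _ _ _ h hy.1)
    · intro h; exact hT _ _ _ hx.1 (hT _ _ _ h hy.2)
  -- background independence of one-coordinate comparisons
  have hsep1 : ∀ (i : N) (a c : A) (y y' : N → A),
      R (Function.update y i a) (Function.update y i c) ↔
      R (Function.update y' i a) (Function.update y' i c) := by
    intro i a c y y'
    have := hSep {i} (fun _ => a) y (fun _ => c) y'
    simpa [splice_eq_update] using this
  -- coordinate-position independence and the key coordinate lemma
  have hcoord : ∀ (i : N) (y : N → A) (a c : A),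
      R (Function.update y i a) (Function.update y i c) ↔ geR R i₀ a c := by
    intro i y a c
    rw [hsep1 i a c y (fun _ => c)]
    have h1 : Function.update (fun _ => c) i c = fun _ : N => c := by
      ext k; by_cases h : k = i <;> simp [Function.update, h]
    have h2 : Function.update (fun _ => c) i a = alloc i a c := (alloc_eq_update i a c).symm
    rw [h1, h2]
    -- move coordinate i to i₀ using the swap permutation
    have hswap1 : (alloc i a c) ∘ (Equiv.swap i i₀) = alloc i₀ a c := by
      ext k
      by_cases h : k = i₀
      · subst h; simp [alloc, Equiv.swap_apply_right, Function.update]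
      · have : Equiv.swap i i₀ k ≠ i := by
          intro hk
          apply h
          have := congrArg (Equiv.swap i i₀) hk
          simpa [Equiv.swap_apply_left] using this
        simp [alloc, Function.update, this, h]
    have hswap2 : (fun _ : N => c) ∘ (Equiv.swap i i₀) = fun _ : N => c := rfl
    constructor
    · intro h
      have e1 := hSym (Equiv.swap i i₀) (alloc i a c)
      have e2 := hSym (Equiv.swap i i₀) (fun _ : N => c)
      rw [hswap1] at e1; rw [hswap2] at e2
      exact (hcong ⟨e1.2, e1.1⟩ ⟨e2.2, e2.1⟩).mpr h
    · intro h
      have e1 := hSym (Equiv.swap i i₀) (alloc i a c)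
      have e2 := hSym (Equiv.swap i i₀) (fun _ : N => c)
      rw [hswap1] at e1; rw [hswap2] at e2
      exact (hcong ⟨e1.1, e1.2⟩ ⟨e2.1, e2.2⟩).mpr h
  set ge : A → A → Prop := geR R i₀ with hge
  have hgerefl : ∀ a, ge a a := by
    intro a
    have := (hcoord i₀ (fun _ => a) a a).mp (hRrefl _)
    exact this
  have hgetotal : ∀ a c, ge a c ∨ ge c a := by
    intro a c
    rcases hC (Function.update (fun _ : N => c) i₀ a) (Function.update (fun _ : N => c) i₀ c) with h | h
    · exact Or.inl ((hcoord i₀ _ a c).mp h)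
    · exact Or.inr ((hcoord i₀ _ c a).mp h)
  have hgetrans : ∀ a b c, ge a b → ge b c → ge a c := by
    intro a b c h1 h2
    have h1' := (hcoord i₀ (fun _ : N => c) a b).mpr h1
    have h2' := (hcoord i₀ (fun _ : N => c) b c).mpr h2
    exact (hcoord i₀ (fun _ : N => c) a c).mp (hT _ _ _ h1' h2')
  set S : Set A := {a | ∃ c, ge a c ∧ ¬ ge c a} with hS
  -- the key consequence of sufficientarian judgment: members of S are top elements
  have hStop : ∀ a ∈ S, ∀ c, ge a c := by
    rintro a ⟨c₀, h1, h2⟩ c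
    have hstrict : StrictRel R (fun _ : N => a) (alloc i₀ c₀ a) := by
      have ha : Function.update (fun _ : N => a) i₀ a = fun _ : N => a := by
        ext k; by_cases h : k = i₀ <;> simp [Function.update, h]
      constructor
      · have := (hcoord i₀ (fun _ : N => a) a c₀).mpr h1
        rwa [ha, ← alloc_eq_update] at this
      · intro hcon
        apply h2
        have : R (Function.update (fun _ : N => a) i₀ c₀) (Function.update (fun _ : N => a) i₀ a) := by
          rwa [ha, ← alloc_eq_update]
        exact (hcoord i₀ (fun _ : N => a) c₀ a).mp this
    have hRthis := hSJ c₀ a c i₀ j₀ hij hstrict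
    have hj : (alloc i₀ c₀ a) j₀ = a := by
      simp [alloc, Function.update, hij.symm]
    have e1 : Function.update (alloc i₀ c₀ a) j₀ a = alloc i₀ c₀ a := by
      ext k
      by_cases h : k = j₀ <;> simp [Function.update, alloc, h, hij.symm]
    have e2 : alloc2 i₀ j₀ c₀ c a = Function.update (alloc i₀ c₀ a) j₀ c :=
      alloc2_eq_update i₀ j₀ c₀ c a
    rw [e2] at hRthis
    exact (hcoord j₀ (alloc i₀ c₀ a) a c).mp (by rw [e1]; exact hRthis)
  have hnotS : ∀ a c, a ∉ S → ge c a := by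
    intro a c ha
    rcases hgetotal c a with h | h
    · exact h
    · by_contra hcon
      exact ha ⟨c, h, hcon⟩
  have hSnot : ∀ a c, a ∈ S → c ∉ S → ¬ ge c a := by
    intro a c haS hcS hca
    obtain ⟨c₀, h1, h2⟩ := haS
    refine hcS ⟨c₀, hgetrans _ _ _ hca h1, fun hcon => h2 (hgetrans _ _ _ hcon hca)⟩
  -- chain lemma
  have hchain : ∀ x y : N → A, (∀ i, ge (x i) (y i)) → R x y := by
    intro x y h
    have key : ∀ s : Finset N, R x (fun i => if i ∈ s then y i else x i) := by
      intro s
      induction s using Finset.induction with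
      | empty => simpa using hRrefl x
      | @insert a s ha ih =>
        set z : N → A := fun i => if i ∈ s then y i else x i with hz
        have hrw : (fun i => if i ∈ insert a s then y i else x i) =
            Function.update z a (y a) := by
          ext k
          by_cases hk : k = a
          · subst hk; simp [Function.update]
          · simp [Function.update, hk, hz]
        rw [hrw]
        refine hT _ _ _ ih ?_
        have hza : z a = x a := by simp [hz, ha]
        have : R (Function.update z a (z a)) (Function.update z a (y a)) := by
          refine (hcoord a z (z a) (y a)).mpr ?_
          rw [hza]; exact h a
        rwa [Function.update_eq_self] at this
    have := key Finset.univ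
    simpa using this
  -- single-coordinate strictness
  have hstrict1 : ∀ (z : N → A) (i : N) (a : A), ge a (z i) → ¬ ge (z i) a →
      StrictRel R (Function.update z i a) z := by
    intro z i a h1 h2
    constructor
    · have := (hcoord i z a (z i)).mpr h1
      rwa [Function.update_eq_self] at this
    · intro hcon
      apply h2
      have : R (Function.update z i (z i)) (Function.update z i a) := by
        rwa [Function.update_eq_self]
      exact (hcoord i z (z i) a).mp this
  -- indifference for equal counts
  have hindiff : ∀ x y : N → A, cntS S x = cntS S y → R x y ∧ R y x := by
    intro x y hcount
    obtain ⟨σ, hσ⟩ := exists_perm_finset (s := Finset.univ.filter fun i => x i ∈ S)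
      (t := Finset.univ.filter fun i => y i ∈ S) hcount
    have hmem : ∀ i, x (σ i) ∈ S ↔ y i ∈ S := by
      intro i
      have := hσ i
      simpa using this
    have hco : ∀ i, ge ((x ∘ σ) i) (y i) ∧ ge (y i) ((x ∘ σ) i) := by
      intro i
      by_cases h : y i ∈ S
      · have hx : x (σ i) ∈ S := (hmem i).mpr h
        exact ⟨hStop _ hx _, hStop _ h _⟩
      · have hx : x (σ i) ∉ S := fun hc => h ((hmem i).mp hc)
        exact ⟨hnotS _ _ h, hnotS _ _ hx⟩
    have h1 : R (x ∘ σ) y := hchain _ _ fun i => (hco i).1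
    have h2 : R y (x ∘ σ) := hchain _ _ fun i => (hco i).2
    have hs := hSym σ x
    exact ⟨hT _ _ _ hs.1 h1, hT _ _ _ h2 hs.2⟩
  -- strict preference for strictly larger counts
  have hstrictcnt : ∀ x y : N → A, cntS S y < cntS S x → StrictRel R x y := by
    intro x y hlt
    -- get a₀ ∈ S and b₀ ∉ S
    have hxS : ∃ i, x i ∈ S := by
      by_contra hcon
      push_neg at hcon
      have : cntS S x = 0 := by
        simp [cntS, Finset.filter_eq_empty_iff.mpr fun i _ => hcon i]
      omega
    have hyS : ∃ i, y i ∉ S := by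
      by_contra hcon
      push_neg at hcon
      have h1 : cntS S y = Fintype.card N := by
        simp [cntS, Finset.filter_true_of_mem fun i _ => hcon i]
      have h2 : cntS S x ≤ Fintype.card N := by
        simpa [cntS] using Finset.card_filter_le Finset.univ fun i => x i ∈ S
      omega
    obtain ⟨ia, ha₀⟩ := hxS
    obtain ⟨ib, hb₀⟩ := hyS
    set a₀ := x ia
    set b₀ := y ib
    set sx : Finset N := Finset.univ.filter fun i => x i ∈ S with hsx
    set sy : Finset N := Finset.univ.filter fun i => y i ∈ S with hsy
    set ind : Finset N → N → A := fun s i => if i ∈ s then a₀ else b₀ with hind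
    have hindmem : ∀ (s : Finset N) i, ind s i ∈ S ↔ i ∈ s := by
      intro s i
      by_cases h : i ∈ s <;> simp [hind, h, ha₀, hb₀]
    have hcnt_ind : ∀ s : Finset N, cntS S (ind s) = s.card := by
      intro s
      unfold cntS
      congr 1
      ext i
      simp [hindmem]
    -- x ∼ ind sx, y ∼ ind sy
    have hxind : R x (ind sx) ∧ R (ind sx) x := by
      refine ⟨hchain _ _ fun i => ?_, hchain _ _ fun i => ?_⟩ <;>
      · by_cases h : x i ∈ S
        · have : i ∈ sx := by simp [hsx, h]
          simp only [hind, if_pos this]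
          first
            | exact hStop _ h _
            | exact hStop _ ha₀ _
        · have : i ∉ sx := by simp [hsx, h]
          simp only [hind, if_neg this]
          first
            | exact hnotS _ _ hb₀
            | exact hnotS _ _ h
    have hyind : R y (ind sy) ∧ R (ind sy) y := by
      refine ⟨hchain _ _ fun i => ?_, hchain _ _ fun i => ?_⟩ <;>
      · by_cases h : y i ∈ S
        · have : i ∈ sy := by simp [hsy, h]
          simp only [hind, if_pos this]
          first
            | exact hStop _ h _
            | exact hStop _ ha₀ _
        · have : i ∉ sy := by simp [hsy, h]
          simp only [hind, if_neg this]
          first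
            | exact hnotS _ _ hb₀
            | exact hnotS _ _ h
    have hcards : sy.card < sx.card := hlt
    obtain ⟨t', ht'sub, ht'card⟩ := Finset.exists_subset_card_eq (le_of_lt hcards)
    -- ind sy ∼ ind t'
    have h_syt' : R (ind sy) (ind t') ∧ R (ind t') (ind sy) :=
      hindiff _ _ (by rw [hcnt_ind, hcnt_ind, ht'card])
    -- R (ind sx) (ind t')
    have hsub_ge : ∀ {u v : Finset N}, v ⊆ u → R (ind u) (ind v) := by
      intro u v huv
      refine hchain _ _ fun i => ?_
      by_cases hv : i ∈ v
      · have hu : i ∈ u := huv hv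
        simp only [hind, if_pos hu, if_pos hv]
        exact hgerefl _
      · simp only [hind, if_neg hv]
        by_cases hu : i ∈ u
        · simp only [if_pos hu]
          exact hStop _ ha₀ _
        · simp only [if_neg hu]
          exact hgerefl _
    have hR1 : R (ind sx) (ind t') := hsub_ge ht'sub
    -- ¬ R (ind t') (ind sx)
    have hnR : ¬ R (ind t') (ind sx) := by
      intro hcon
      have hne : ∃ k ∈ sx, k ∉ t' := by
        by_contra hc
        push_neg at hc
        have := Finset.card_le_card hc
        omega
      obtain ⟨k, hk1, hk2⟩ := hne
      have hw : StrictRel R (Function.update (ind t') k a₀) (ind t') := by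
        refine hstrict1 _ _ _ ?_ ?_
        · simp only [hind, if_neg hk2]
          exact hStop _ ha₀ _
        · simp only [hind, if_neg hk2]
          exact hSnot _ _ ha₀ hb₀
      have hupd : Function.update (ind t') k a₀ = ind (insert k t') := by
        ext m
        by_cases hm : m = k
        · subst hm; simp [hind, Function.update]
        · simp [hind, Function.update, hm]
      have hins_sub : insert k t' ⊆ sx := Finset.insert_subset hk1 ht'sub
      have h2 : R (ind sx) (ind (insert k t')) := hsub_ge hins_sub
      have h3 : R (ind t') (ind (insert k t')) := hT _ _ _ hcon h2
      rw [← hupd] at h3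
      exact hw.2 h3
    constructor
    · exact hT _ _ _ hxind.1 (hT _ _ _ hR1 (hT _ _ _ h_syt'.2 hyind.2))
    · intro hcon
      exact hnR (hT _ _ _ h_syt'.2 (hT _ _ _ hyind.2 (hT _ _ _ hcon hxind.1)))
  -- upper comprehensiveness of S
  have hupper : ∀ a ∈ S, ∀ b : A, a ≤ b → b ∈ S := by
    rintro a ⟨c₀, h1, h2⟩ b hab
    have hba : ge b a := by
      have hdom : ∀ i, (fun _ : N => a) i ≤ (alloc i₀ b a) i := by
        intro i
        by_cases h : i = i₀ <;> simp [alloc, Function.update, h, hab, le_refl]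
      exact hM _ _ hdom
    exact ⟨c₀, hgetrans _ _ _ hba h1, fun hcon => h2 (hgetrans _ _ _ hcon hba)⟩
  refine ⟨S, hupper, fun x y => ?_⟩
  rw [natCard_eq_cntS, natCard_eq_cntS]
  rcases lt_trichotomy (cntS S x) (cntS S y) with h | h | h
  · exact iff_of_false (hstrictcnt y x h).2 (by omega)
  · exact iff_of_true (hindiff x y h).1 (by omega)
  · exact iff_of_true (hstrictcnt x y h).1 (le_of_lt h)

end Forward

section Backward

open Classical Function Finset

variable {N A : Type*} [Fintype N] [Preorder A]

omit [Preorder A] in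
lemma cntS_splice (S : Set A) (M : Set N) (x y : N → A) :
    cntS S (splice M x y) =
      (Finset.univ.filter fun i => i ∈ M ∧ x i ∈ S).card +
      (Finset.univ.filter fun i => i ∉ M ∧ y i ∈ S).card := by
  classical
  unfold cntS
  rw [← Finset.card_union_of_disjoint]
  · congr 1
    refine Finset.ext fun i => ?_
    rw [Finset.mem_filter, Finset.mem_union, Finset.mem_filter, Finset.mem_filter]
    by_cases h : i ∈ M <;> simp [splice, h]
  · rw [Finset.disjoint_left]
    intro i hi1 hi2
    simp only [Finset.mem_filter, Finset.mem_univ, true_and] at hi1 hi2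
    exact hi2.1 hi1.1

lemma backward_dir (R : (N → A) → (N → A) → Prop)
    (h : IsMonotoneSufficientarian R) :
    WeakOrderRel R ∧ SymmetryAx R ∧ SeparabilityAx R ∧ SuffJudgment R ∧ MonotonicityAx R := by
  classical
  obtain ⟨S, hupper, hrep⟩ := h
  have hrep' : ∀ x y : N → A, R x y ↔ cntS S y ≤ cntS S x := by
    intro x y
    rw [hrep x y, natCard_eq_cntS, natCard_eq_cntS]
  refine ⟨⟨fun x y => ?_, fun x y z h1 h2 => ?_⟩, ?_, ?_, ?_, ?_⟩
  · rcases le_total (cntS S y) (cntS S x) with h | h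
    · exact Or.inl ((hrep' x y).mpr h)
    · exact Or.inr ((hrep' y x).mpr h)
  · exact (hrep' x z).mpr (le_trans ((hrep' y z).mp h2) ((hrep' x y).mp h1))
  · -- symmetry
    intro σ x
    have hc : cntS S (x ∘ σ) = cntS S x := by
      rw [← natCard_eq_cntS, ← natCard_eq_cntS]
      exact Nat.card_congr (σ.subtypeEquiv fun i => Iff.rfl)
    exact ⟨(hrep' _ _).mpr hc.le, (hrep' _ _).mpr hc.ge⟩
  · -- separability
    intro M x y x' y'
    rw [hrep', hrep', cntS_splice, cntS_splice, cntS_splice, cntS_splice]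
    omega
  · -- sufficientarian judgment
    intro a b c i j hij hstr
    have h1 : cntS S (alloc i a b) < cntS S (fun _ : N => b) := by
      have h2 := hstr.2
      rw [hrep' (alloc i a b) (fun _ => b)] at h2
      omega
    have hbS : b ∈ S := by
      by_contra hb
      have hz : cntS S (fun _ : N => b) = 0 := by
        simp [cntS, Finset.filter_eq_empty_iff.mpr fun i _ => hb]
      omega
    refine (hrep' _ _).mpr ?_
    rw [alloc2_eq_update]
    unfold cntS
    apply Finset.card_le_card
    intro k hk
    simp only [Finset.mem_filter, Finset.mem_univ, true_and] at hk ⊢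
    by_cases hkj : k = j
    · subst hkj
      have hjb : (alloc i a b) k = b := by simp [alloc, Function.update, hij.symm]
      rw [hjb]; exact hbS
    · simpa [Function.update, hkj] using hk
  · -- monotonicity
    intro x y hxy
    refine (hrep' _ _).mpr ?_
    unfold cntS
    apply Finset.card_le_card
    intro k hk
    simp only [Finset.mem_filter, Finset.mem_univ, true_and] at hk ⊢
    exact hupper _ hk _ (hxy k)

end Backward

/-- weak order, symmetry, separability, sufficientarian judgment and
monotonicity characterize monotone-sufficientarianism. -/
theorem stmt3 {N A : Type*} [Fintype N] (hN : 2 ≤ Fintype.card N) [Preorder A] [Nonempty A]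
    (R : (N → A) → (N → A) → Prop) :
    (WeakOrderRel R ∧ SymmetryAx R ∧ SeparabilityAx R ∧ SuffJudgment R ∧ MonotonicityAx R)
      ↔ IsMonotoneSufficientarian R := by
  constructor
  · rintro ⟨⟨hC, hT⟩, hSym, hSep, hSJ, hM⟩
    exact forward_dir hN R hC hT hSym hSep hSJ hM
  · intro h
    exact backward_dir R h
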